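/- P-almost surely, for all sufficiently large n the event B_n := { S̄_{b_{n−1}} < a_n^{1/α} ℓ_α(a_n) } holds; that is, eventually the two-sided sum of the traps over [−b_{n−1}, b_{n−1}] is less than a_n^{1/α} ℓ_α(a_n). -/

import Mathlib

open MeasureTheory ProbabilityTheory Filter

/-- The logarithmic correction `ℓ_α(u)`: equal to `1` for `α ∈ (0,1)` and `log u` for `α = 1`. -/
noncomputable def ell (α u : ℝ) : ℝ := if α = 1 then Real.log u else 1

/-- The scale `a_n := ⌊e^{2 n log n}⌋`. -/
noncomputable def aseq (n : ℕ) : ℕ := ⌊Real.exp (2 * n * Real.log n)⌋₊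

/-- The scale `b_n := ⌈ε⁻¹ a_n⌉`. -/
noncomputable def bseq (ε : ℝ) (n : ℕ) : ℕ := ⌈ε⁻¹ * (aseq n : ℝ)⌉₊

/-- The two-sided sum `S̄_n := Σ_{i = -n}^{n} σ_i`. -/
noncomputable def trapSumTwoSided {Ω : Type*} (σ : ℤ → Ω → ℝ) (n : ℕ) (ω : Ω) : ℝ :=
  ∑ i ∈ Finset.Icc (-(n : ℤ)) (n : ℤ), σ i ω

open scoped ENNReal

set_option maxHeartbeats 1000000

lemma ofReal_sum_le' {ι : Type*} (s : Finset ι) (f : ι → ℝ) :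
    ENNReal.ofReal (∑ i ∈ s, f i) ≤ ∑ i ∈ s, ENNReal.ofReal (f i) := by
  classical
  induction s using Finset.induction with
  | empty => simp
  | insert _ _ h ih =>
      rw [Finset.sum_insert h, Finset.sum_insert h]
      exact (ENNReal.ofReal_add_le).trans (by gcongr)

/-- Core tail estimate via truncation + Markov. -/
lemma sum_tail_bound {Ω : Type*} [MeasurableSpace Ω] (P : Measure Ω) [IsProbabilityMeasure P]
    (α : ℝ)
    (σ : ℤ → Ω → ℝ) (hmeas : ∀ i, Measurable (σ i))
    (hident : ∀ i, IdentDistrib (σ i) (σ 0) P P)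
    (htail : ∀ u : ℝ, 1 ≤ u → P {ω | u ≤ σ 0 ω} = ENNReal.ofReal (u ^ (-α)))
    (k : ℕ) (t : ℝ) (ht : 1 ≤ t) :
    P {ω | t ≤ ∑ i ∈ Finset.Icc (-(k : ℤ)) (k : ℤ), σ i ω} ≤
      (2 * k + 1 : ℕ) * (ENNReal.ofReal (t ^ (-α)) +
        (ENNReal.ofReal 1 + ∫⁻ u in Set.Ioc 1 t, ENNReal.ofReal (u ^ (-α))) /
          ENNReal.ofReal t) := by
  have ht0 : (0:ℝ) < t := lt_of_lt_of_le one_pos ht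
  set F : Finset ℤ := Finset.Icc (-(k : ℤ)) (k : ℤ) with hF
  have hcard : F.card = 2 * k + 1 := by
    rw [hF, Int.card_Icc]; omega
  set g : ℤ → Ω → ℝ≥0∞ := fun i ω => ENNReal.ofReal (min (σ i ω) t) with hg
  have hgmeas : ∀ i, Measurable (g i) := fun i =>
    ((hmeas i).min measurable_const).ennreal_ofReal
  have hincl : {ω | t ≤ ∑ i ∈ F, σ i ω} ⊆
      (⋃ i ∈ F, {ω | t ≤ σ i ω}) ∪ {ω | ENNReal.ofReal t ≤ ∑ i ∈ F, g i ω} := by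
    intro ω hω
    by_cases hc : ∃ i ∈ F, t ≤ σ i ω
    · left; obtain ⟨i, hi, hit⟩ := hc
      exact Set.mem_biUnion hi hit
    · right
      push_neg at hc
      have : ∀ i ∈ F, g i ω = ENNReal.ofReal (σ i ω) := fun i hi => by
        rw [hg]; simp only; rw [min_eq_left (le_of_lt (hc i hi))]
      calc ENNReal.ofReal t ≤ ENNReal.ofReal (∑ i ∈ F, σ i ω) :=
            ENNReal.ofReal_le_ofReal hω
        _ ≤ ∑ i ∈ F, ENNReal.ofReal (σ i ω) := ofReal_sum_le' _ _
        _ = ∑ i ∈ F, g i ω := by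
            exact (Finset.sum_congr rfl this).symm
  have htail' : ∀ i, P {ω | t ≤ σ i ω} = ENNReal.ofReal (t ^ (-α)) := by
    intro i
    have : {ω | t ≤ σ i ω} = σ i ⁻¹' Set.Ici t := rfl
    rw [this, (hident i).measure_mem_eq measurableSet_Ici]
    exact htail t ht
  have hmark : P {ω | ENNReal.ofReal t ≤ ∑ i ∈ F, g i ω} ≤
      (∑ i ∈ F, ∫⁻ ω, g i ω ∂P) / ENNReal.ofReal t := by
    rw [ENNReal.le_div_iff_mul_le (Or.inl (by simp [ht0])) (Or.inl ENNReal.ofReal_ne_top),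
      mul_comm]
    calc ENNReal.ofReal t * P {ω | ENNReal.ofReal t ≤ ∑ i ∈ F, g i ω} ≤
          ∫⁻ ω, ∑ i ∈ F, g i ω ∂P :=
        mul_meas_ge_le_lintegral₀ (Finset.aemeasurable_fun_sum F fun i _ => (hgmeas i).aemeasurable)
          (ENNReal.ofReal t)
      _ = ∑ i ∈ F, ∫⁻ ω, g i ω ∂P := lintegral_finset_sum F fun i _ => hgmeas i
  have hli : ∀ i, (∫⁻ ω, g i ω ∂P) = ∫⁻ ω, g 0 ω ∂P := by
    intro i
    have hφ : Measurable fun x : ℝ => ENNReal.ofReal (min x t) :=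
      (measurable_id.min measurable_const).ennreal_ofReal
    calc (∫⁻ ω, g i ω ∂P)
        = ∫⁻ x, ENNReal.ofReal (min x t) ∂(P.map (σ i)) :=
          (lintegral_map hφ (hmeas i)).symm
      _ = ∫⁻ x, ENNReal.ofReal (min x t) ∂(P.map (σ 0)) := by rw [(hident i).map_eq]
      _ = ∫⁻ ω, g 0 ω ∂P := lintegral_map hφ (hmeas 0)
  have hae1 : ∀ᵐ ω ∂P, 1 ≤ σ 0 ω := by
    have hms : MeasurableSet {ω | 1 ≤ σ 0 ω} := measurableSet_le measurable_const (hmeas 0)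
    have h1 : P {ω | 1 ≤ σ 0 ω} = 1 := by
      rw [htail 1 le_rfl]; simp
    have : P {ω | 1 ≤ σ 0 ω}ᶜ = 0 := by
      rw [measure_compl hms (measure_ne_top _ _), h1, measure_univ, tsub_self]
    exact (ae_iff).2 this
  have hlay : (∫⁻ ω, g 0 ω ∂P) ≤
      ENNReal.ofReal 1 + ∫⁻ u in Set.Ioc 1 t, ENNReal.ofReal (u ^ (-α)) := by
    have hnn : 0 ≤ᵐ[P] fun ω => min (σ 0 ω) t := by
      filter_upwards [hae1] with ω h1
      exact le_min (le_trans zero_le_one h1) (le_of_lt ht0)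
    have hmble : AEMeasurable (fun ω => min (σ 0 ω) t) P :=
      ((hmeas 0).min measurable_const).aemeasurable
    rw [hg]
    simp only
    rw [lintegral_eq_lintegral_meas_le P hnn hmble]
    have hsplit : Set.Ioi (0:ℝ) = (Set.Ioc 0 1 ∪ Set.Ioc 1 t) ∪ Set.Ioi t := by
      rw [Set.Ioc_union_Ioc_eq_Ioc zero_le_one ht, Set.Ioc_union_Ioi_eq_Ioi (le_trans zero_le_one ht)]
    rw [hsplit, lintegral_union measurableSet_Ioi ((Set.Ioc_disjoint_Ioi ht).union_left (Set.Ioc_disjoint_Ioi le_rfl)),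
      lintegral_union measurableSet_Ioc (Set.Ioc_disjoint_Ioc_of_le le_rfl)]
    have p1 : (∫⁻ u in Set.Ioc (0:ℝ) 1, P {a | u ≤ min (σ 0 a) t}) ≤ ENNReal.ofReal 1 := by
      calc (∫⁻ u in Set.Ioc (0:ℝ) 1, P {a | u ≤ min (σ 0 a) t})
          ≤ ∫⁻ _ in Set.Ioc (0:ℝ) 1, 1 := lintegral_mono fun u => prob_le_one
        _ = volume (Set.Ioc (0:ℝ) 1) := setLIntegral_one _
        _ = ENNReal.ofReal 1 := by rw [Real.volume_Ioc]; norm_num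
    have p2 : (∫⁻ u in Set.Ioc (1:ℝ) t, P {a | u ≤ min (σ 0 a) t}) ≤
        ∫⁻ u in Set.Ioc (1:ℝ) t, ENNReal.ofReal (u ^ (-α)) := by
      refine setLIntegral_mono (by fun_prop) fun u hu => ?_
      calc P {a | u ≤ min (σ 0 a) t} ≤ P {a | u ≤ σ 0 a} :=
            measure_mono fun a ha => show u ≤ σ 0 a from le_trans ha (min_le_left _ _)
        _ = ENNReal.ofReal (u ^ (-α)) := htail u hu.1.le
    have p3 : (∫⁻ u in Set.Ioi t, P {a | u ≤ min (σ 0 a) t}) = 0 := by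
      rw [setLIntegral_congr_fun measurableSet_Ioi
        (fun u (hu : t < u) => ?_), lintegral_zero]
      have : {a | u ≤ min (σ 0 a) t} = ∅ := by
        ext a
        simp only [Set.mem_setOf_eq, Set.mem_empty_iff_false, iff_false, not_le]
        exact lt_of_le_of_lt (min_le_right _ _) hu
      rw [this, measure_empty]
    rw [p3, add_zero]
    exact add_le_add p1 p2
  calc P {ω | t ≤ ∑ i ∈ F, σ i ω}
      ≤ P ((⋃ i ∈ F, {ω | t ≤ σ i ω}) ∪ {ω | ENNReal.ofReal t ≤ ∑ i ∈ F, g i ω}) :=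
        measure_mono hincl
    _ ≤ P (⋃ i ∈ F, {ω | t ≤ σ i ω}) + P {ω | ENNReal.ofReal t ≤ ∑ i ∈ F, g i ω} :=
        measure_union_le _ _
    _ ≤ (∑ i ∈ F, P {ω | t ≤ σ i ω}) + (∑ i ∈ F, ∫⁻ ω, g i ω ∂P) / ENNReal.ofReal t :=
        add_le_add (measure_biUnion_finset_le F _) hmark
    _ = (F.card : ℝ≥0∞) * ENNReal.ofReal (t ^ (-α)) +
        ((F.card : ℝ≥0∞) * ∫⁻ ω, g 0 ω ∂P) / ENNReal.ofReal t := by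
        rw [Finset.sum_congr rfl (fun i _ => htail' i), Finset.sum_const, nsmul_eq_mul,
          Finset.sum_congr rfl (fun i _ => hli i), Finset.sum_const, nsmul_eq_mul]
    _ ≤ (F.card : ℝ≥0∞) * ENNReal.ofReal (t ^ (-α)) +
        ((F.card : ℝ≥0∞) * (ENNReal.ofReal 1 + ∫⁻ u in Set.Ioc 1 t, ENNReal.ofReal (u ^ (-α))))
          / ENNReal.ofReal t := by gcongr
    _ = (2 * k + 1 : ℕ) * (ENNReal.ofReal (t ^ (-α)) +
        (ENNReal.ofReal 1 + ∫⁻ u in Set.Ioc 1 t, ENNReal.ofReal (u ^ (-α))) /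
          ENNReal.ofReal t) := by
        rw [hcard]; simp only [div_eq_mul_inv, mul_add, add_mul]; ring

lemma integrable_rpow_Ioc {α t : ℝ} (ht : 1 ≤ t) :
    IntegrableOn (fun u : ℝ => u ^ (-α)) (Set.Ioc 1 t) volume := by
  have h0 : (0:ℝ) ∉ Set.uIcc (1:ℝ) t :=
    Set.notMem_uIcc_of_lt one_pos (lt_of_lt_of_le one_pos ht)
  have := intervalIntegral.intervalIntegrable_rpow (μ := volume) (r := -α)
    (a := 1) (b := t) (Or.inr h0)
  exact (intervalIntegrable_iff_integrableOn_Ioc_of_le ht).1 this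

lemma int_rpow_bound_lt {α : ℝ} (hα1 : α < 1) {t : ℝ} (ht : 1 ≤ t) :
    (∫⁻ u in Set.Ioc 1 t, ENNReal.ofReal (u ^ (-α))) ≤
      ENNReal.ofReal (t ^ (1 - α) * (1 - α)⁻¹) := by
  have hnn : 0 ≤ᵐ[volume.restrict (Set.Ioc 1 t)] fun u : ℝ => u ^ (-α) := by
    filter_upwards [self_mem_ae_restrict measurableSet_Ioc] with u hu
    exact Real.rpow_nonneg (le_trans zero_le_one hu.1.le) _
  rw [← ofReal_integral_eq_lintegral_ofReal (integrable_rpow_Ioc ht) hnn]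
  apply ENNReal.ofReal_le_ofReal
  rw [← intervalIntegral.integral_of_le ht, integral_rpow (Or.inl (by linarith))]
  rw [Real.one_rpow]
  have h1 : -α + 1 = 1 - α := by ring
  rw [h1]
  have h2 : (0:ℝ) < 1 - α := by linarith
  rw [div_le_iff₀ h2]
  have : t ^ (1 - α) * (1 - α)⁻¹ * (1 - α) = t ^ (1 - α) := by
    field_simp
  rw [this]
  linarith [Real.rpow_nonneg (le_trans zero_le_one ht) (1 - α)]

lemma int_rpow_bound_one {t : ℝ} (ht : 1 ≤ t) :
    (∫⁻ u in Set.Ioc 1 t, ENNReal.ofReal (u ^ (-(1:ℝ)))) ≤ ENNReal.ofReal (Real.log t) := by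
  have hnn : 0 ≤ᵐ[volume.restrict (Set.Ioc 1 t)] fun u : ℝ => u ^ (-(1:ℝ)) := by
    filter_upwards [self_mem_ae_restrict measurableSet_Ioc] with u hu
    exact Real.rpow_nonneg (le_trans zero_le_one hu.1.le) _
  rw [← ofReal_integral_eq_lintegral_ofReal (integrable_rpow_Ioc ht) hnn]
  apply ENNReal.ofReal_le_ofReal
  rw [← intervalIntegral.integral_of_le ht]
  have hcong : ∫ x in (1:ℝ)..t, x ^ (-(1:ℝ)) = ∫ x in (1:ℝ)..t, 1 / x := by
    apply intervalIntegral.integral_congr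
    intro x _
    show x ^ (-(1:ℝ)) = 1 / x
    rw [Real.rpow_neg_one, one_div]
  rw [hcong, integral_one_div (Set.notMem_uIcc_of_lt one_pos (lt_of_lt_of_le one_pos ht)),
    div_one]

lemma exparg_nonneg (n : ℕ) : 0 ≤ 2 * (n:ℝ) * Real.log n := by
  rcases Nat.eq_zero_or_pos n with h | h
  · simp [h]
  · have : (1:ℝ) ≤ n := by exact_mod_cast h
    have := Real.log_nonneg this
    positivity

lemma aseq_one_le (n : ℕ) : 1 ≤ aseq n := by
  rw [aseq]
  exact Nat.le_floor (by simpa using Real.one_le_exp (exparg_nonneg n))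

lemma aseq_pos_real (n : ℕ) : (0:ℝ) < (aseq n : ℝ) := by
  exact_mod_cast Nat.lt_of_lt_of_le Nat.zero_lt_one (aseq_one_le n)

lemma aseq_ge_16 {n : ℕ} (hn : 2 ≤ n) : (16:ℝ) ≤ (aseq n : ℝ) := by
  have h16 : (16:ℝ) ≤ Real.exp (2 * n * Real.log n) := by
    have hlog : Real.log 16 ≤ 2 * n * Real.log n := by
      have h2 : Real.log 2 ≤ Real.log n :=
        Real.log_le_log two_pos (by exact_mod_cast hn)
      have hn4 : (4:ℝ) ≤ 2 * n := by
        have : (2:ℝ) ≤ n := by exact_mod_cast hn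
        linarith
      have h16' : Real.log 16 = 4 * Real.log 2 := by
        rw [show (16:ℝ) = 2 ^ (4:ℕ) by norm_num, Real.log_pow]
        push_cast; ring
      rw [h16']
      have hl2 : 0 ≤ Real.log 2 := Real.log_nonneg one_le_two
      calc 4 * Real.log 2 ≤ (2 * n) * Real.log 2 := by nlinarith
        _ ≤ 2 * n * Real.log n := by nlinarith
    calc (16:ℝ) = Real.exp (Real.log 16) := by rw [Real.exp_log]; norm_num
      _ ≤ _ := Real.exp_le_exp.2 hlog
  have : (16:ℕ) ≤ aseq n := Nat.le_floor (by exact_mod_cast h16)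
  exact_mod_cast this

lemma aseq_le_exp (m : ℕ) : (aseq m : ℝ) ≤ Real.exp (2 * m * Real.log m) :=
  Nat.floor_le (Real.exp_nonneg _)

lemma exp_le_two_aseq {n : ℕ} (hn : 2 ≤ n) :
    Real.exp (2 * n * Real.log n) ≤ 2 * (aseq n : ℝ) := by
  set x := Real.exp (2 * n * Real.log n) with hx
  have h1 : x - 1 ≤ (aseq n : ℝ) := (Nat.sub_one_lt_floor x).le
  have h2 : (16:ℝ) ≤ x := by
    calc (16:ℝ) ≤ (aseq n : ℝ) := aseq_ge_16 hn
      _ ≤ x := aseq_le_exp n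
  linarith

lemma aseq_ratio {n : ℕ} (hn : 2 ≤ n) :
    (aseq (n-1) : ℝ) * (n:ℝ)^2 ≤ 2 * (aseq n : ℝ) := by
  have hm : ((n-1 : ℕ) : ℝ) = (n:ℝ) - 1 := by
    have : 1 ≤ n := by omega
    push_cast [Nat.cast_sub this]; ring
  have hn2 : (2:ℝ) ≤ n := by exact_mod_cast hn
  have hn1 : (1:ℝ) ≤ ((n-1:ℕ):ℝ) := by rw [hm]; linarith
  have hnpos : (0:ℝ) < n := by positivity
  have hlogn : 0 ≤ Real.log n := Real.log_nonneg (by exact_mod_cast le_trans one_le_two hn)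
  have hsq : ((n:ℝ))^2 = Real.exp (2 * Real.log n) := by
    rw [show (2:ℝ) * Real.log n = Real.log n + Real.log n by ring, Real.exp_add,
      Real.exp_log hnpos]; ring
  calc (aseq (n-1) : ℝ) * (n:ℝ)^2
      ≤ Real.exp (2 * ((n-1:ℕ):ℝ) * Real.log ((n-1:ℕ):ℝ)) * Real.exp (2 * Real.log n) := by
        rw [← hsq]
        exact mul_le_mul_of_nonneg_right (aseq_le_exp (n-1)) (by positivity)
    _ = Real.exp (2 * ((n-1:ℕ):ℝ) * Real.log ((n-1:ℕ):ℝ) + 2 * Real.log n) := by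
        rw [Real.exp_add]
    _ ≤ Real.exp (2 * n * Real.log n) := by
        apply Real.exp_le_exp.2
        have hlm : Real.log ((n-1:ℕ):ℝ) ≤ Real.log n :=
          Real.log_le_log (by linarith) (by rw [hm]; linarith)
        have hlmn : 0 ≤ Real.log ((n-1:ℕ):ℝ) := Real.log_nonneg hn1
        calc 2 * ((n-1:ℕ):ℝ) * Real.log ((n-1:ℕ):ℝ) + 2 * Real.log n
            ≤ 2 * ((n-1:ℕ):ℝ) * Real.log n + 2 * Real.log n := by nlinarith
          _ = 2 * n * Real.log n := by rw [hm]; ring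
    _ ≤ 2 * (aseq n : ℝ) := exp_le_two_aseq hn

lemma bseq_K_bound {ε : ℝ} (hε0 : 0 < ε) (hε1 : ε < 1) (m : ℕ) :
    (2 * (bseq ε m) + 1 : ℝ) ≤ 5 * ε⁻¹ * (aseq m : ℝ) := by
  have hinv : (1:ℝ) ≤ ε⁻¹ := by
    rw [← one_div]
    exact one_le_one_div hε0 hε1.le
  have ha1 : (1:ℝ) ≤ (aseq m : ℝ) := by exact_mod_cast aseq_one_le m
  have hb : (bseq ε m : ℝ) < ε⁻¹ * (aseq m : ℝ) + 1 := by
    rw [bseq]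
    exact Nat.ceil_lt_add_one (by positivity)
  nlinarith [mul_le_mul hinv ha1 zero_le_one (by positivity : (0:ℝ) ≤ ε⁻¹)]

/-- `P`-almost surely, the events
`B_n = {S̄_{b_{n-1}} < a_n^{1/α} ℓ_α(a_n)}` hold for all sufficiently large `n`. -/
theorem eventB_eventually
    {Ω : Type*} [MeasurableSpace Ω] (P : Measure Ω) [IsProbabilityMeasure P]
    (α : ℝ) (hα : α ∈ Set.Ioc (0 : ℝ) 1) (ε : ℝ) (hε : ε ∈ Set.Ioo (0 : ℝ) 1)
    (σ : ℤ → Ω → ℝ) (hmeas : ∀ i, Measurable (σ i))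
    (hindep : iIndepFun σ P)
    (hident : ∀ i, IdentDistrib (σ i) (σ 0) P P)
    (htail : ∀ u : ℝ, 1 ≤ u → P {ω | u ≤ σ 0 ω} = ENNReal.ofReal (u ^ (-α))) :
    ∀ᵐ ω ∂P, ∀ᶠ n : ℕ in Filter.atTop,
      trapSumTwoSided σ (bseq ε (n - 1)) ω < (aseq n : ℝ) ^ (1 / α) * ell α (aseq n) := by
  obtain ⟨hα0, hα1⟩ := hα
  obtain ⟨hε0, hε1⟩ := hε
  set D : ℝ := 10 * (4 + (1 - α)⁻¹) * ε⁻¹ with hD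
  have hc0 : 0 ≤ (1 - α)⁻¹ := inv_nonneg.2 (by linarith)
  have hεinv : (0:ℝ) < ε⁻¹ := by positivity
  have hD0 : 0 < D := by positivity
  -- the key estimate
  have key : ∀ n : ℕ, 2 ≤ n →
      P {ω | (aseq n : ℝ) ^ (1 / α) * ell α (aseq n) ≤ trapSumTwoSided σ (bseq ε (n - 1)) ω}
        ≤ ENNReal.ofReal (D / (n:ℝ)^2) := by
    intro n hn
    set k := bseq ε (n - 1) with hk
    have ha16 : (16:ℝ) ≤ (aseq n : ℝ) := aseq_ge_16 hn
    have ha0 : (0:ℝ) < (aseq n : ℝ) := aseq_pos_real n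
    have ha1 : (1:ℝ) ≤ (aseq n : ℝ) := by linarith
    have hK : (2 * k + 1 : ℝ) ≤ 5 * ε⁻¹ * (aseq (n-1) : ℝ) := bseq_K_bound hε0 hε1 (n-1)
    have hratio : (aseq (n-1) : ℝ) * (n:ℝ)^2 ≤ 2 * (aseq n : ℝ) := aseq_ratio hn
    have hb1 : (1:ℝ) ≤ (aseq (n-1) : ℝ) := by exact_mod_cast aseq_one_le (n-1)
    have hn2 : (2:ℝ) ≤ (n:ℝ) := by exact_mod_cast hn
    have hnpos : (0:ℝ) < (n:ℝ)^2 := by positivity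
    rcases eq_or_lt_of_le hα1 with hq | hlt
    · -- case α = 1
      subst hq
      have hL2 : (2:ℝ) ≤ Real.log (aseq n) := by
        have he2 : Real.exp 2 ≤ (aseq n : ℝ) := by
          have := Real.exp_one_lt_d9
          have h2 : Real.exp 2 = Real.exp 1 * Real.exp 1 := by
            rw [← Real.exp_add]; norm_num
          nlinarith [Real.exp_pos 1]
        calc (2:ℝ) = Real.log (Real.exp 2) := (Real.log_exp 2).symm
          _ ≤ Real.log (aseq n) := Real.log_le_log (Real.exp_pos 2) he2
      set a := (aseq n : ℝ) with haa
      set L := Real.log a with hLL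
      have ht_eq : a ^ (1 / (1:ℝ)) * ell 1 a = a * L := by
        rw [ell, if_pos rfl]
        norm_num
        exact Or.inl hLL.symm
      have ht1 : (1:ℝ) ≤ a * L := by nlinarith
      have ht0 : (0:ℝ) < a * L := by linarith
      rw [ht_eq]
      have hbound := sum_tail_bound P 1 σ hmeas hident htail k (a * L) ht1
      have hint := int_rpow_bound_one ht1
      -- ENNReal massaging
      have hlogt0 : 0 ≤ Real.log (a * L) := Real.log_nonneg ht1
      have step : ((2 * k + 1 : ℕ) : ℝ≥0∞) * (ENNReal.ofReal ((a*L) ^ (-(1:ℝ))) +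
          (ENNReal.ofReal 1 + ∫⁻ u in Set.Ioc 1 (a*L), ENNReal.ofReal (u ^ (-(1:ℝ)))) /
            ENNReal.ofReal (a*L)) ≤ ENNReal.ofReal (D / (n:ℝ)^2) := by
        calc ((2 * k + 1 : ℕ) : ℝ≥0∞) * (ENNReal.ofReal ((a*L) ^ (-(1:ℝ))) +
            (ENNReal.ofReal 1 + ∫⁻ u in Set.Ioc 1 (a*L), ENNReal.ofReal (u ^ (-(1:ℝ)))) /
              ENNReal.ofReal (a*L))
            ≤ ((2 * k + 1 : ℕ) : ℝ≥0∞) * (ENNReal.ofReal ((a*L) ^ (-(1:ℝ))) +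
              (ENNReal.ofReal 1 + ENNReal.ofReal (Real.log (a*L))) / ENNReal.ofReal (a*L)) := by
              gcongr
          _ = ENNReal.ofReal ((2 * k + 1 : ℝ) * ((a*L) ^ (-(1:ℝ)) +
              (1 + Real.log (a*L)) / (a*L))) := by
              rw [← ENNReal.ofReal_add zero_le_one hlogt0,
                ← ENNReal.ofReal_div_of_pos ht0,
                ← ENNReal.ofReal_add (Real.rpow_nonneg ht0.le _) (by positivity),
                ← ENNReal.ofReal_natCast (2*k+1),
                ← ENNReal.ofReal_mul (p := ((2*k+1:ℕ):ℝ)) (Nat.cast_nonneg _)]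
              push_cast
              ring_nf
          _ ≤ ENNReal.ofReal (D / (n:ℝ)^2) := by
              apply ENNReal.ofReal_le_ofReal
              have hrw : (a*L) ^ (-(1:ℝ)) = (a*L)⁻¹ := Real.rpow_neg_one _
              rw [hrw]
              have hlt : Real.log (a*L) ≤ 2 * L := by
                rw [Real.log_mul (by linarith) (by linarith), hLL]
                have : Real.log L ≤ L := by
                  calc Real.log L ≤ Real.log a := Real.log_le_log (by linarith)
                        (Real.log_le_self (by linarith))
                    _ = L := rfl
                linarith
              have e2 : (a*L)⁻¹ + (1 + Real.log (a*L)) / (a*L) ≤ 3 / a := by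
                rw [inv_eq_one_div, ← add_div, div_le_div_iff₀ ht0 ha0]
                have h3 : 1 + (1 + Real.log (a*L)) ≤ 3 * L := by linarith
                nlinarith [mul_le_mul_of_nonneg_right h3 ha0.le]
              have e3 : (2 * k + 1 : ℝ) * (3 / a) ≤ D / (n:ℝ)^2 := by
                rw [← mul_div_assoc, div_le_div_iff₀ ha0 hnpos]
                have hDval : D = 40 * ε⁻¹ := by rw [hD]; norm_num
                calc (2 * k + 1 : ℝ) * 3 * (n:ℝ)^2
                    ≤ (5 * ε⁻¹ * (aseq (n-1):ℝ)) * 3 * (n:ℝ)^2 := by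
                      exact mul_le_mul_of_nonneg_right
                        (mul_le_mul_of_nonneg_right hK (by norm_num)) hnpos.le
                  _ = 15 * ε⁻¹ * ((aseq (n-1):ℝ) * (n:ℝ)^2) := by ring
                  _ ≤ 15 * ε⁻¹ * (2 * a) := mul_le_mul_of_nonneg_left hratio (by positivity)
                  _ ≤ D * a := by
                      rw [hDval]
                      nlinarith [mul_pos hεinv ha0]
              calc (2 * k + 1 : ℝ) * ((a*L)⁻¹ + (1 + Real.log (a*L)) / (a*L))
                  ≤ (2 * k + 1 : ℝ) * (3 / a) := by
                    apply mul_le_mul_of_nonneg_left e2 (by positivity)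
                _ ≤ D / (n:ℝ)^2 := e3
      exact le_trans hbound step
    · -- case α < 1
      have hne : α ≠ 1 := ne_of_lt hlt
      set a := (aseq n : ℝ) with haa
      set t := a ^ (1/α) with htt
      have hexp1 : (1:ℝ) ≤ 1/α := by
        rw [le_div_iff₀ hα0]; linarith
      have hta : a ≤ t := by
        calc a = a ^ (1:ℝ) := (Real.rpow_one a).symm
          _ ≤ a ^ (1/α) := Real.rpow_le_rpow_of_exponent_le ha1 hexp1
      have ht1 : (1:ℝ) ≤ t := by linarith
      have ht0 : (0:ℝ) < t := by linarith
      have ht_eq : a ^ (1/α) * ell α a = t := by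
        rw [ell, if_neg hne, mul_one]
      rw [ht_eq]
      have htneg : t ^ (-α) = a⁻¹ := by
        rw [htt, ← Real.rpow_mul ha0.le, show (1/α) * (-α) = -1 by field_simp]
        exact Real.rpow_neg_one a
      have hmix : t ^ (1 - α) * t⁻¹ = t ^ (-α) := by
        rw [← Real.rpow_neg_one t, ← Real.rpow_add ht0]
        ring_nf
      have hbound := sum_tail_bound P α σ hmeas hident htail k t ht1
      have hint := int_rpow_bound_lt hlt ht1
      have hnn1 : 0 ≤ t ^ (1 - α) * (1 - α)⁻¹ :=
        mul_nonneg (Real.rpow_nonneg ht0.le _) hc0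
      have step : ((2 * k + 1 : ℕ) : ℝ≥0∞) * (ENNReal.ofReal (t ^ (-α)) +
          (ENNReal.ofReal 1 + ∫⁻ u in Set.Ioc 1 t, ENNReal.ofReal (u ^ (-α))) /
            ENNReal.ofReal t) ≤ ENNReal.ofReal (D / (n:ℝ)^2) := by
        calc ((2 * k + 1 : ℕ) : ℝ≥0∞) * (ENNReal.ofReal (t ^ (-α)) +
            (ENNReal.ofReal 1 + ∫⁻ u in Set.Ioc 1 t, ENNReal.ofReal (u ^ (-α))) /
              ENNReal.ofReal t)
            ≤ ((2 * k + 1 : ℕ) : ℝ≥0∞) * (ENNReal.ofReal (t ^ (-α)) +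
              (ENNReal.ofReal 1 + ENNReal.ofReal (t ^ (1-α) * (1-α)⁻¹)) / ENNReal.ofReal t) := by
              gcongr
          _ = ENNReal.ofReal ((2 * k + 1 : ℝ) * (t ^ (-α) +
              (1 + t ^ (1-α) * (1-α)⁻¹) / t)) := by
              rw [← ENNReal.ofReal_add zero_le_one hnn1,
                ← ENNReal.ofReal_div_of_pos ht0,
                ← ENNReal.ofReal_add (Real.rpow_nonneg ht0.le _)
                  (div_nonneg (by linarith) ht0.le),
                ← ENNReal.ofReal_natCast (2*k+1),
                ← ENNReal.ofReal_mul (p := ((2*k+1:ℕ):ℝ)) (Nat.cast_nonneg _)]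
              push_cast
              ring_nf
          _ ≤ ENNReal.ofReal (D / (n:ℝ)^2) := by
              apply ENNReal.ofReal_le_ofReal
              have h1t : 1/t ≤ a⁻¹ := by
                rw [one_div]
                exact inv_anti₀ ha0 hta
              have hsplit : (1 + t ^ (1-α) * (1-α)⁻¹)/t = 1/t + a⁻¹ * (1-α)⁻¹ := by
                rw [add_div]
                congr 1
                rw [div_eq_mul_inv, mul_right_comm, hmix, htneg]
              have e2 : t ^ (-α) + (1 + t ^ (1-α) * (1-α)⁻¹)/t ≤ (2 + (1-α)⁻¹) / a := by
                rw [htneg, hsplit]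
                have expand : (2 + (1-α)⁻¹)/a = 2*a⁻¹ + (1-α)⁻¹*a⁻¹ := by
                  rw [div_eq_mul_inv]; ring
                rw [expand]
                have ha' : 0 ≤ a⁻¹ := by positivity
                nlinarith
              have e3 : (2 * k + 1 : ℝ) * ((2 + (1-α)⁻¹) / a) ≤ D / (n:ℝ)^2 := by
                rw [← mul_div_assoc, div_le_div_iff₀ ha0 hnpos]
                calc (2 * k + 1 : ℝ) * (2 + (1-α)⁻¹) * (n:ℝ)^2
                    ≤ (5 * ε⁻¹ * (aseq (n-1):ℝ)) * (2 + (1-α)⁻¹) * (n:ℝ)^2 := by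
                      exact mul_le_mul_of_nonneg_right
                        (mul_le_mul_of_nonneg_right hK (by linarith)) hnpos.le
                  _ = 5 * ε⁻¹ * (2 + (1-α)⁻¹) * ((aseq (n-1):ℝ) * (n:ℝ)^2) := by ring
                  _ ≤ 5 * ε⁻¹ * (2 + (1-α)⁻¹) * (2 * a) := by
                      apply mul_le_mul_of_nonneg_left hratio (by positivity)
                  _ ≤ D * a := by
                      rw [hD]
                      nlinarith [mul_pos hεinv ha0]
              calc (2 * k + 1 : ℝ) * (t ^ (-α) + (1 + t ^ (1-α) * (1-α)⁻¹)/t)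
                  ≤ (2 * k + 1 : ℝ) * ((2 + (1-α)⁻¹) / a) :=
                    mul_le_mul_of_nonneg_left e2 (by positivity)
                _ ≤ D / (n:ℝ)^2 := e3
      exact le_trans hbound step
  -- summability and Borel-Cantelli
  have hsum : (∑' n : ℕ, P {ω | (aseq n : ℝ) ^ (1 / α) * ell α (aseq n) ≤
      trapSumTwoSided σ (bseq ε (n - 1)) ω}) ≠ ⊤ := by
    have hle : ∀ n : ℕ, P {ω | (aseq n : ℝ) ^ (1 / α) * ell α (aseq n) ≤
        trapSumTwoSided σ (bseq ε (n - 1)) ω} ≤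
        (if n < 2 then (1:ℝ≥0∞) else 0) + ENNReal.ofReal (D / (n:ℝ)^2) := by
      intro n
      by_cases h : n < 2
      · rw [if_pos h]
        exact le_trans prob_le_one le_self_add
      · rw [if_neg h, zero_add]
        exact key n (by omega)
    have h1 : (∑' n : ℕ, (if n < 2 then (1:ℝ≥0∞) else 0)) = 2 := by
      rw [tsum_eq_sum (s := Finset.range 2) (fun n hn => if_neg (by simpa using hn))]
      simp [Finset.sum_range_succ]
      rfl
    have h2 : (∑' n : ℕ, ENNReal.ofReal (D / (n:ℝ)^2)) ≠ ⊤ := by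
      have hsummable : Summable (fun n : ℕ => D / (n:ℝ)^2) := by
        have hs := Real.summable_one_div_nat_pow.mpr (by norm_num : 1 < 2)
        exact (hs.mul_left D).congr (fun n => by rw [mul_one_div])
      rw [← ENNReal.ofReal_tsum_of_nonneg (fun n => by positivity) hsummable]
      exact ENNReal.ofReal_ne_top
    apply ne_top_of_le_ne_top _ (ENNReal.tsum_le_tsum hle)
    rw [ENNReal.tsum_add, h1]
    exact ENNReal.add_ne_top.2 ⟨by norm_num, h2⟩
  filter_upwards [MeasureTheory.ae_eventually_notMem hsum] with ω hω
  exact hω.mono fun n hn => not_le.1 hn
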